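/- Let K ≥ 1 be an integer, Π a finite nonempty set, A : Π → ℝ, and y : Π → {1,…,K}. Let p be a probability distribution on a finite set D ⊆ ℝ^K. Let c and c′ be independent random vectors each distributed according to p, and let δ be uniform on {−1,1}, independent of (c, c′). Then min_{i∈{1,…,K}} E_{c∼p}[ c(i) + sup_{π∈Π}( A_π − c(y(π)) ) ] ≤ E[ sup_{π∈Π}( A_π + δ·( c′(y(π)) − c(y(π)) ) ) ]. -/

import Mathlib

open MeasureTheory ProbabilityTheory

/-- The law of a single Rademacher (uniform `{-1,1}`-valued) real random variable. -/
noncomputable def signLaw : Measure ℝ :=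
  (2⁻¹ : ENNReal) • (Measure.dirac (-1) + Measure.dirac 1)

/-- The measure on `ℝ^K` corresponding to a probability distribution `p`
supported on a finite set `D` of vectors. -/
noncomputable def vecMeas {K : ℕ} (D : Finset (Fin K → ℝ)) (p : (Fin K → ℝ) → ℝ) :
    Measure (Fin K → ℝ) :=
  ∑ v ∈ D, ENNReal.ofReal (p v) • Measure.dirac v

section helpers

variable {α β ι : Type*} [MeasurableSpace α] [MeasurableSpace β]

lemma map_finsetSum_meas {f : α → β} (hf : Measurable f) (s : Finset ι) (m : ι → Measure α) :
    Measure.map f (∑ i ∈ s, m i) = ∑ i ∈ s, Measure.map f (m i) := by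
  classical
  induction s using Finset.cons_induction with
  | empty => simp
  | cons a s ha ih =>
    rw [Finset.sum_cons, Finset.sum_cons, Measure.map_add _ _ hf, ih]

lemma prod_finsetSum_left (s : Finset ι) (m : ι → Measure α) (ν : Measure β) [SFinite ν] :
    (∑ i ∈ s, m i).prod ν = ∑ i ∈ s, (m i).prod ν := by
  ext t ht
  rw [Measure.prod_apply ht, lintegral_finset_sum_measure, Measure.finset_sum_apply]
  exact Finset.sum_congr rfl fun i _ => (Measure.prod_apply ht).symm

lemma prod_smul_left (a : ENNReal) (μ : Measure α) (ν : Measure β) [SFinite ν] :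
    (a • μ).prod ν = a • (μ.prod ν) := by
  ext t ht
  rw [Measure.prod_apply ht, lintegral_smul_measure, Measure.smul_apply,
    Measure.prod_apply ht, smul_eq_mul]

lemma integrable_dirac'' [MeasurableSingletonClass α] {f : α → ℝ} (hf : Measurable f) (x : α) :
    Integrable f (Measure.dirac x) := by
  refine ⟨hf.aestronglyMeasurable, ?_⟩
  rw [HasFiniteIntegral, lintegral_dirac]
  exact ENNReal.coe_lt_top

end helpers

instance signLaw_finite : IsFiniteMeasure signLaw := by
  constructor
  rw [signLaw]
  simp [Measure.add_apply]

instance vecMeas_finite {K : ℕ} (D : Finset (Fin K → ℝ)) (p : (Fin K → ℝ) → ℝ) :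
    IsFiniteMeasure (vecMeas D p) := by
  constructor
  rw [vecMeas, Measure.finset_sum_apply]
  exact ENNReal.sum_lt_top.mpr fun v _ => by
    simp [ENNReal.mul_lt_top, ENNReal.ofReal_lt_top, measure_lt_top]

lemma dirac_prod_signLaw {γ : Type*} [MeasurableSpace γ] (x : γ) :
    (Measure.dirac x).prod signLaw
      = (2⁻¹ : ENNReal) • (Measure.dirac (x, (-1:ℝ)) + Measure.dirac (x, (1:ℝ))) := by
  rw [Measure.dirac_prod, signLaw, Measure.map_smul,
    Measure.map_add _ _ measurable_prodMk_left,
    Measure.map_dirac' measurable_prodMk_left, Measure.map_dirac' measurable_prodMk_left]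

lemma integral_vecMeas {K : ℕ} (D : Finset (Fin K → ℝ)) (p : (Fin K → ℝ) → ℝ)
    (hp0 : ∀ v ∈ D, 0 ≤ p v) {g : (Fin K → ℝ) → ℝ} (hg : Measurable g) :
    ∫ x, g x ∂(vecMeas D p) = ∑ v ∈ D, p v * g v := by
  rw [vecMeas, integral_finset_sum_measure
    (fun v _ => (integrable_dirac'' hg v).smul_measure ENNReal.ofReal_ne_top)]
  refine Finset.sum_congr rfl fun v hv => ?_
  rw [integral_smul_measure, integral_dirac, ENNReal.toReal_ofReal (hp0 v hv), smul_eq_mul]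

lemma jointLaw_eq {K : ℕ} (D : Finset (Fin K → ℝ)) (p : (Fin K → ℝ) → ℝ) :
    ((vecMeas D p).prod (vecMeas D p)).prod signLaw
      = ∑ v ∈ D, ∑ w ∈ D,
          (ENNReal.ofReal (p v) * ENNReal.ofReal (p w) * 2⁻¹) •
            (Measure.dirac (((v, w), (-1:ℝ))) + Measure.dirac (((v, w), (1:ℝ)))) := by
  have h1 : (vecMeas D p).prod (vecMeas D p)
      = ∑ v ∈ D, ∑ w ∈ D,
          (ENNReal.ofReal (p v) * ENNReal.ofReal (p w)) • Measure.dirac (v, w) := by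
    nth_rewrite 1 [vecMeas]
    rw [prod_finsetSum_left]
    refine Finset.sum_congr rfl fun v _ => ?_
    rw [prod_smul_left, Measure.dirac_prod, vecMeas,
      map_finsetSum_meas measurable_prodMk_left, Finset.smul_sum]
    refine Finset.sum_congr rfl fun w _ => ?_
    rw [Measure.map_smul, Measure.map_dirac' measurable_prodMk_left, smul_smul]
  rw [h1, prod_finsetSum_left]
  refine Finset.sum_congr rfl fun v _ => ?_
  rw [prod_finsetSum_left]
  refine Finset.sum_congr rfl fun w _ => ?_
  rw [prod_smul_left, dirac_prod_signLaw, smul_smul]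

lemma integral_jointLaw {K : ℕ} (D : Finset (Fin K → ℝ)) (p : (Fin K → ℝ) → ℝ)
    (hp0 : ∀ v ∈ D, 0 ≤ p v)
    {g : ((Fin K → ℝ) × (Fin K → ℝ)) × ℝ → ℝ} (hg : Measurable g) :
    ∫ x, g x ∂(((vecMeas D p).prod (vecMeas D p)).prod signLaw)
      = ∑ v ∈ D, ∑ w ∈ D, p v * p w * (2⁻¹ * (g ((v, w), -1) + g ((v, w), 1))) := by
  have hcne : ∀ v w : Fin K → ℝ,
      (ENNReal.ofReal (p v) * ENNReal.ofReal (p w) * 2⁻¹) ≠ ⊤ := by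
    intro v w
    exact ENNReal.mul_ne_top (ENNReal.mul_ne_top ENNReal.ofReal_ne_top ENNReal.ofReal_ne_top)
      (by simp)
  have hint : ∀ (x : ((Fin K → ℝ) × (Fin K → ℝ)) × ℝ) (y : _),
      Integrable g (Measure.dirac x + Measure.dirac y) :=
    fun x y => (integrable_dirac'' hg x).add_measure (integrable_dirac'' hg y)
  rw [jointLaw_eq, integral_finset_sum_measure (fun v _ =>
      integrable_finset_sum_measure.mpr (fun w _ => (hint _ _).smul_measure (hcne v w)))]
  refine Finset.sum_congr rfl fun v hv => ?_
  rw [integral_finset_sum_measure (fun w _ => (hint _ _).smul_measure (hcne v w))]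
  refine Finset.sum_congr rfl fun w hw => ?_
  rw [integral_smul_measure,
    integral_add_measure (integrable_dirac'' hg _) (integrable_dirac'' hg _),
    integral_dirac, integral_dirac, ENNReal.toReal_mul, ENNReal.toReal_mul,
    ENNReal.toReal_ofReal (hp0 v hv), ENNReal.toReal_ofReal (hp0 w hw)]
  simp [smul_eq_mul]
  ring

theorem stmt6 (K : ℕ) (hK : 1 ≤ K)
    {P : Type*} [Fintype P] [Nonempty P] (A : P → ℝ) (y : P → Fin K)
    (D : Finset (Fin K → ℝ)) (p : (Fin K → ℝ) → ℝ)
    (hp0 : ∀ v ∈ D, 0 ≤ p v) (hp1 : ∑ v ∈ D, p v = 1)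
    {Ω : Type*} [MeasurableSpace Ω] (μ : Measure Ω) [IsProbabilityMeasure μ]
    (c c' : Ω → Fin K → ℝ) (δ : Ω → ℝ)
    (hc_meas : Measurable c) (hc'_meas : Measurable c') (hδ_meas : Measurable δ)
    (hlaw : Measure.map (fun ω => ((c ω, c' ω), δ ω)) μ
      = ((vecMeas D p).prod (vecMeas D p)).prod signLaw) :
    Finset.univ.inf' (Finset.univ_nonempty_iff.mpr (Fin.pos_iff_nonempty.mp hK))
      (fun i => ∫ v, (v i + Finset.univ.sup' Finset.univ_nonempty
          (fun π => A π - v (y π))) ∂(vecMeas D p))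
    ≤ ∫ ω, Finset.univ.sup' Finset.univ_nonempty
        (fun π => A π + δ ω * (c' ω (y π) - c ω (y π))) ∂μ := by
  classical
  have hne : (Finset.univ : Finset P).Nonempty := Finset.univ_nonempty
  have hneK : (Finset.univ : Finset (Fin K)).Nonempty :=
    Finset.univ_nonempty_iff.mpr (Fin.pos_iff_nonempty.mp hK)
  -- notation
  set S : Fin K → ℝ := fun i => ∑ v ∈ D, p v * v i with hS
  set sA : (Fin K → ℝ) → ℝ :=
    fun v => Finset.univ.sup' hne (fun π => A π - v (y π)) with hsA
  set T : ℝ := ∑ v ∈ D, p v * sA v with hT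
  set h : (Fin K → ℝ) → (Fin K → ℝ) → ℝ :=
    fun v w => Finset.univ.sup' hne (fun π => A π + (w (y π) - v (y π))) with hh
  -- measurability facts
  have hsAm : Measurable sA := by
    have hm := Finset.measurable_sup' (s := (Finset.univ : Finset P)) hne
      (f := fun π (v : Fin K → ℝ) => A π - v (y π))
      (fun π _ => measurable_const.sub (measurable_pi_apply (y π)))
    have heq : sA = Finset.univ.sup' hne (fun π (v : Fin K → ℝ) => A π - v (y π)) :=
      funext fun v => (Finset.sup'_apply (f := fun π (v : Fin K → ℝ) => A π - v (y π)) hne v).symm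
    rw [heq]
    exact hm
  have hInti : ∀ i : Fin K,
      (∫ v, (v i + Finset.univ.sup' Finset.univ_nonempty
        (fun π => A π - v (y π))) ∂(vecMeas D p)) = S i + T := by
    intro i
    have : (∫ v, (v i + sA v) ∂(vecMeas D p)) = ∑ v ∈ D, p v * (v i + sA v) :=
      integral_vecMeas D p hp0 ((measurable_pi_apply i).add hsAm)
    rw [show (fun v : Fin K → ℝ => v i + Finset.univ.sup' Finset.univ_nonempty
        (fun π => A π - v (y π))) = fun v => v i + sA v from rfl, this]
    simp only [mul_add, Finset.sum_add_distrib, hS, hT]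
  -- the generic function on the product space
  set G : ((Fin K → ℝ) × (Fin K → ℝ)) × ℝ → ℝ :=
    fun x => Finset.univ.sup' hne (fun π => A π + x.2 * (x.1.2 (y π) - x.1.1 (y π))) with hG
  have hGm : Measurable G := by
    have hm := Finset.measurable_sup' (s := (Finset.univ : Finset P)) hne
      (f := fun π (x : ((Fin K → ℝ) × (Fin K → ℝ)) × ℝ) =>
        A π + x.2 * (x.1.2 (y π) - x.1.1 (y π)))
      (fun π _ => measurable_const.add
        (measurable_snd.mul ((measurable_fst.snd.eval).sub (measurable_fst.fst.eval))))
    have heq : G = Finset.univ.sup' hne (fun π (x : ((Fin K → ℝ) × (Fin K → ℝ)) × ℝ) =>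
        A π + x.2 * (x.1.2 (y π) - x.1.1 (y π))) :=
      funext fun x => (Finset.sup'_apply (f := fun π (x : ((Fin K → ℝ) × (Fin K → ℝ)) × ℝ) => A π + x.2 * (x.1.2 (y π) - x.1.1 (y π))) hne x).symm
    rw [heq]
    exact hm
  -- rewrite the RHS integral
  have hmapm : AEMeasurable (fun ω => ((c ω, c' ω), δ ω)) μ :=
    ((hc_meas.prodMk hc'_meas).prodMk hδ_meas).aemeasurable
  have hRHS : (∫ ω, Finset.univ.sup' Finset.univ_nonempty
        (fun π => A π + δ ω * (c' ω (y π) - c ω (y π))) ∂μ)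
      = ∑ v ∈ D, ∑ w ∈ D, p v * p w * (2⁻¹ * (G ((v, w), -1) + G ((v, w), 1))) := by
    have := integral_map (f := G) hmapm (by
      rw [hlaw]; exact hGm.aestronglyMeasurable)
    rw [hlaw] at this
    rw [← integral_jointLaw D p hp0 hGm, ← this]
  have hGneg : ∀ v w : Fin K → ℝ, G ((v, w), -1) = h w v := by
    intro v w
    simp only [hG, hh]
    exact Finset.sup'_congr hne rfl fun π _ => by ring
  have hGpos : ∀ v w : Fin K → ℝ, G ((v, w), 1) = h v w := by
    intro v w
    simp only [hG, hh]
    exact Finset.sup'_congr hne rfl fun π _ => by ring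
  -- symmetrize
  have hswap : ∑ v ∈ D, ∑ w ∈ D, p v * p w * h w v
      = ∑ v ∈ D, ∑ w ∈ D, p v * p w * h v w := by
    rw [Finset.sum_comm]
    exact Finset.sum_congr rfl fun v _ => Finset.sum_congr rfl fun w _ => by ring
  have hsym : ∑ v ∈ D, ∑ w ∈ D, p v * p w * (2⁻¹ * (G ((v, w), -1) + G ((v, w), 1)))
      = ∑ v ∈ D, ∑ w ∈ D, p v * p w * h v w := by
    calc ∑ v ∈ D, ∑ w ∈ D, p v * p w * (2⁻¹ * (G ((v, w), -1) + G ((v, w), 1)))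
        = ∑ v ∈ D, ∑ w ∈ D,
            (2⁻¹ * (p v * p w * h w v) + 2⁻¹ * (p v * p w * h v w)) := by
          refine Finset.sum_congr rfl fun v _ => Finset.sum_congr rfl fun w _ => ?_
          rw [hGneg, hGpos]; ring
      _ = 2⁻¹ * (∑ v ∈ D, ∑ w ∈ D, p v * p w * h w v)
            + 2⁻¹ * (∑ v ∈ D, ∑ w ∈ D, p v * p w * h v w) := by
          simp [Finset.sum_add_distrib, Finset.mul_sum]
      _ = ∑ v ∈ D, ∑ w ∈ D, p v * p w * h v w := by rw [hswap]; ring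
  -- choose minimizing coordinate
  obtain ⟨i0, _, hi0⟩ := Finset.exists_mem_eq_inf' hneK S
  have hSi0 : ∀ j : Fin K, S i0 ≤ S j := fun j => by
    rw [← hi0]; exact Finset.inf'_le _ (Finset.mem_univ j)
  -- lower bound the symmetrized sum
  have hlb : S i0 + T ≤ ∑ v ∈ D, ∑ w ∈ D, p v * p w * h v w := by
    have hbound : ∀ v ∈ D, p v * (sA v + S i0) ≤ ∑ w ∈ D, p v * p w * h v w := by
      intro v hv
      obtain ⟨πv, _, hπv⟩ := Finset.exists_mem_eq_sup' hne (fun π => A π - v (y π))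
      have hsv : sA v = A πv - v (y πv) := hπv
      have h1 : ∀ w : Fin K → ℝ, sA v + w (y πv) ≤ h v w := by
        intro w
        have hle := Finset.le_sup' (fun π => A π + (w (y π) - v (y π))) (Finset.mem_univ πv)
        calc sA v + w (y πv) = A πv + (w (y πv) - v (y πv)) := by rw [hsv]; ring
          _ ≤ h v w := hle
      have h2 : ∑ w ∈ D, p w * (sA v + w (y πv)) ≤ ∑ w ∈ D, p w * h v w :=
        Finset.sum_le_sum fun w hw =>
          mul_le_mul_of_nonneg_left (h1 w) (hp0 w hw)
      have h3 : ∑ w ∈ D, p w * (sA v + w (y πv)) = sA v + S (y πv) := by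
        calc ∑ w ∈ D, p w * (sA v + w (y πv))
            = ∑ w ∈ D, (p w * sA v + p w * w (y πv)) :=
              Finset.sum_congr rfl fun w _ => by ring
          _ = (∑ w ∈ D, p w) * sA v + ∑ w ∈ D, p w * w (y πv) := by
              rw [Finset.sum_add_distrib, Finset.sum_mul]
          _ = sA v + S (y πv) := by rw [hp1, hS]; ring
      have h4 : sA v + S i0 ≤ ∑ w ∈ D, p w * h v w := by
        calc sA v + S i0 ≤ sA v + S (y πv) := by linarith [hSi0 (y πv)]
          _ = ∑ w ∈ D, p w * (sA v + w (y πv)) := h3.symm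
          _ ≤ ∑ w ∈ D, p w * h v w := h2
      calc p v * (sA v + S i0) ≤ p v * ∑ w ∈ D, p w * h v w :=
            mul_le_mul_of_nonneg_left h4 (hp0 v hv)
        _ = ∑ w ∈ D, p v * p w * h v w := by
            rw [Finset.mul_sum]
            exact Finset.sum_congr rfl fun w _ => by ring
    have hsplit : ∑ v ∈ D, p v * (sA v + S i0) = T + S i0 := by
      calc ∑ v ∈ D, p v * (sA v + S i0)
          = ∑ v ∈ D, (p v * sA v + p v * S i0) :=
            Finset.sum_congr rfl fun v _ => by ring
        _ = (∑ v ∈ D, p v * sA v) + (∑ v ∈ D, p v) * S i0 := by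
            rw [Finset.sum_add_distrib, Finset.sum_mul]
        _ = T + S i0 := by rw [hp1, hT]; ring
    have := Finset.sum_le_sum hbound
    rw [hsplit] at this
    linarith
  -- conclude
  refine le_trans (Finset.inf'_le _ (Finset.mem_univ i0)) ?_
  rw [hInti i0, hRHS, hsym]
  exact hlb
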